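/- Let D be a nonempty open connected subset of the real quaternions ℍ and let f : ℍ → ℍ. Suppose that for every q ∈ D the limit of h⁻¹·(f(q+h) − f(q)) as h → 0 (h ≠ 0, q + h ∈ D) exists in ℍ. Then there exist constants ν, λ ∈ ℍ such that f(q) = q·ν + λ for all q ∈ D. -/

import Mathlib

set_option maxHeartbeats 1000000


open Quaternion Filter Topology Asymptotics

noncomputable section

/-- The imaginary unit `i` of the real quaternions. -/
def qI : ℍ[ℝ] := ⟨0, 1, 0, 0⟩
/-- The imaginary unit `j` of the real quaternions. -/
def qJ : ℍ[ℝ] := ⟨0, 0, 1, 0⟩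
/-- The imaginary unit `k` of the real quaternions. -/
def qK : ℍ[ℝ] := ⟨0, 0, 0, 1⟩

/-- Quaternion rotation `p ↦ μ p μ⁻¹`. -/
def qRot (μ p : ℍ[ℝ]) : ℍ[ℝ] := μ * p * μ⁻¹

/-- The left GHR derivative `∂f/∂q^μ` at `q`. -/
def lD (f : ℍ[ℝ] → ℍ[ℝ]) (μ q : ℍ[ℝ]) : ℍ[ℝ] :=
  (4 : ℍ[ℝ])⁻¹ * (fderiv ℝ f q 1 - fderiv ℝ f q qI * qRot μ qI
    - fderiv ℝ f q qJ * qRot μ qJ - fderiv ℝ f q qK * qRot μ qK)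

/-- The left conjugate GHR derivative `∂f/∂q^{μ*}` at `q`. -/
def lDc (f : ℍ[ℝ] → ℍ[ℝ]) (μ q : ℍ[ℝ]) : ℍ[ℝ] :=
  (4 : ℍ[ℝ])⁻¹ * (fderiv ℝ f q 1 + fderiv ℝ f q qI * qRot μ qI
    + fderiv ℝ f q qJ * qRot μ qJ + fderiv ℝ f q qK * qRot μ qK)

/-- The right GHR derivative `∂ᵣf/∂q^μ` at `q`. -/
def rD (f : ℍ[ℝ] → ℍ[ℝ]) (μ q : ℍ[ℝ]) : ℍ[ℝ] :=
  (4 : ℍ[ℝ])⁻¹ * (fderiv ℝ f q 1 - qRot μ qI * fderiv ℝ f q qI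
    - qRot μ qJ * fderiv ℝ f q qJ - qRot μ qK * fderiv ℝ f q qK)

/-- The right conjugate GHR derivative `∂ᵣf/∂q^{μ*}` at `q`. -/
def rDc (f : ℍ[ℝ] → ℍ[ℝ]) (μ q : ℍ[ℝ]) : ℍ[ℝ] :=
  (4 : ℍ[ℝ])⁻¹ * (fderiv ℝ f q 1 + qRot μ qI * fderiv ℝ f q qI
    + qRot μ qJ * fderiv ℝ f q qJ + qRot μ qK * fderiv ℝ f q qK)

lemma qI_mul_qI : qI * qI = -1 := by
  ext <;> simp [Quaternion.re_mul, Quaternion.imI_mul, Quaternion.imJ_mul, Quaternion.imK_mul] <;> simp [qI]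

def phiH : ℂ →ₐ[ℝ] ℍ[ℝ] := Complex.liftAux qI qI_mul_qI

lemma phiH_apply (z : ℂ) : phiH z = (⟨z.re, z.im, 0, 0⟩ : ℍ[ℝ]) := by
  ext <;> simp [phiH, Complex.liftAux_apply, Quaternion.re_coe, Quaternion.imI_coe] <;> simp [qI]

lemma phiH_I : phiH Complex.I = qI := Complex.liftAux_apply_I _ _

instance modCH : Module ℂ ℍ[ℝ] := Module.compHom ℍ[ℝ] (phiH.toRingHom)

lemma csmul_def (z : ℂ) (x : ℍ[ℝ]) : z • x = phiH z * x := rfl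

instance : IsScalarTower ℝ ℂ ℍ[ℝ] :=
  ⟨fun r z x => by simp [csmul_def, map_smul, Algebra.smul_def, mul_assoc,
    (Algebra.commutes r (phiH z)).symm] ⟩

lemma norm_phiH (z : ℂ) : ‖phiH z‖ = ‖z‖ := by
  have h1 : ‖phiH z‖ ^ 2 = ‖z‖ ^ 2 := by
    rw [sq, sq, ← Quaternion.normSq_eq_norm_mul_self, Complex.norm_mul_self_eq_normSq,
      Quaternion.normSq_def', phiH_apply, Complex.normSq_apply]
    ring
  have := congrArg Real.sqrt h1
  rwa [Real.sqrt_sq (norm_nonneg _), Real.sqrt_sq (norm_nonneg _)] at this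

instance : NormedSpace ℂ ℍ[ℝ] where
  norm_smul_le z x := by rw [csmul_def, norm_mul, norm_phiH]

def rmulH (c : ℍ[ℝ]) : ℍ[ℝ] →L[ℝ] ℍ[ℝ] := (ContinuousLinearMap.mul ℝ ℍ[ℝ]).flip c

lemma rmulH_apply (c x : ℍ[ℝ]) : rmulH c x = x * c := rfl

def Lf (f : ℍ[ℝ] → ℍ[ℝ]) (q : ℍ[ℝ]) : ℍ[ℝ] := fderiv ℝ f q 1

lemma hasFDeriv_of_lim {D : Set ℍ[ℝ]} {f : ℍ[ℝ] → ℍ[ℝ]} (hD : IsOpen D) {q : ℍ[ℝ]} (hq : q ∈ D)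
    {L0 : ℍ[ℝ]}
    (h : Tendsto (fun h : ℍ[ℝ] => h⁻¹ * (f (q + h) - f q))
      (𝓝[{h : ℍ[ℝ] | h ≠ 0 ∧ q + h ∈ D}] 0) (𝓝 L0)) :
    HasFDerivAt f (rmulH L0) q := by
  rw [hasFDerivAt_iff_isLittleO_nhds_zero, Asymptotics.isLittleO_iff]
  intro ε hε
  have hevD : ∀ᶠ x : ℍ[ℝ] in 𝓝 0, q + x ∈ D := by
    have hc : Tendsto (fun x : ℍ[ℝ] => q + x) (𝓝 0) (𝓝 q) := by
      simpa using (continuous_add_left q).tendsto (0 : ℍ[ℝ])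
    exact hc.eventually (p := fun y => y ∈ D) (hD.mem_nhds hq)
  have h2 : ∀ᶠ x in 𝓝[{h : ℍ[ℝ] | h ≠ 0 ∧ q + h ∈ D}] 0,
      ‖x⁻¹ * (f (q + x) - f q) - L0‖ ≤ ε := by
    have hmem : {y : ℍ[ℝ] | ‖y - L0‖ ≤ ε} ∈ 𝓝 L0 := by
      apply mem_of_superset (Metric.ball_mem_nhds L0 hε)
      intro y hy
      exact le_of_lt (by simpa [dist_eq_norm] using hy)
    exact h hmem
  rw [eventually_nhdsWithin_iff] at h2
  filter_upwards [h2, hevD] with x hx hxD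
  rcases eq_or_ne x 0 with rfl | hx0
  · simp [rmulH_apply]
  · have hb := hx ⟨hx0, hxD⟩
    have key : f (q + x) - f q - rmulH L0 x
        = x * (x⁻¹ * (f (q + x) - f q) - L0) := by
      rw [rmulH_apply, mul_sub, ← mul_assoc, mul_inv_cancel₀ hx0, one_mul]
    rw [key, norm_mul, mul_comm]
    exact mul_le_mul_of_nonneg_right hb (norm_nonneg _)

lemma fundamental {D : Set ℍ[ℝ]} {f : ℍ[ℝ] → ℍ[ℝ]} (hD : IsOpen D)
    (hlim : ∀ q ∈ D, ∃ L : ℍ[ℝ],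
      Tendsto (fun h : ℍ[ℝ] => h⁻¹ * (f (q + h) - f q))
        (𝓝[{h : ℍ[ℝ] | h ≠ 0 ∧ q + h ∈ D}] 0) (𝓝 L)) :
    ∀ q ∈ D, HasFDerivAt f (rmulH (Lf f q)) q := by
  intro q hq
  obtain ⟨L0, h⟩ := hlim q hq
  have H := hasFDeriv_of_lim hD hq h
  have hL : Lf f q = L0 := by
    rw [Lf, H.fderiv, rmulH_apply, one_mul]
  rw [hL]; exact H

lemma real_mul_mul (t : ℝ) (u c : ℍ[ℝ]) : u * (algebraMap ℝ ℍ[ℝ] t) * c = t • (u * c) := by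
  rw [← Algebra.commutes t u, ← Algebra.smul_def, smul_mul_assoc]

lemma sliceLemma {D : Set ℍ[ℝ]} {f : ℍ[ℝ] → ℍ[ℝ]} (hD : IsOpen D)
    (hf : ∀ q ∈ D, HasFDerivAt f (rmulH (Lf f q)) q)
    {q₀ : ℍ[ℝ]} (hq₀ : q₀ ∈ D) (u c : ℍ[ℝ]) (hu : u ≠ 0) (hc : c ≠ 0) :
    ∃ W : ℍ[ℝ], HasDerivAt (fun t : ℝ => Lf f (q₀ + t • (u * c))) (c⁻¹ * W) 0 ∧
      HasDerivAt (fun t : ℝ => Lf f (q₀ + t • (u * qI * c))) (c⁻¹ * (qI * W)) 0 := by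
  set p : ℂ → ℍ[ℝ] := fun z => q₀ + u * phiH z * c with hp_def
  have hPlin : IsLinearMap ℝ (fun m : ℂ => u * phiH m * c) := by
    constructor
    · intro a b; simp [map_add, mul_add, add_mul]
    · intro r a
      rw [map_smul]
      rw [show ((r:ℝ) • phiH a) = (r:ℍ[ℝ]) * phiH a from (Quaternion.coe_mul_eq_smul r (phiH a)).symm]
      rw [show (u * ((r:ℍ[ℝ]) * phiH a) * c) = (r:ℍ[ℝ]) * (u * phiH a * c) by
        rw [← mul_assoc u, ← Quaternion.coe_commutes r u]; simp [mul_assoc]]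
      rw [Quaternion.coe_mul_eq_smul]
  set P : ℂ →L[ℝ] ℍ[ℝ] := LinearMap.toContinuousLinearMap hPlin.mk' with hP_def
  have hP_apply : ∀ m, P m = u * phiH m * c := fun m => rfl
  have hp : ∀ z, HasFDerivAt p P z := fun z => (P.hasFDerivAt).const_add q₀
  have hpc : Continuous p := continuous_const.add P.continuous
  set U : Set ℂ := p ⁻¹' D with hU_def
  have hU : IsOpen U := hD.preimage hpc
  have h0U : (0 : ℂ) ∈ U := by
    simp only [hU_def, Set.mem_preimage, hp_def, map_zero, mul_zero, zero_mul, add_zero]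
    exact hq₀
  set G : ℂ → ℍ[ℝ] := fun z => u⁻¹ * f (p z) with hG_def
  have keyA : ∀ z ∈ U, HasDerivAt G (c * Lf f (p z)) z := by
    intro z hz
    have hlin : IsLinearMap ℝ (fun m : ℂ => m • (c * Lf f (p z)) : ℂ → ℍ[ℝ]) := by
      constructor
      · intro a b; rw [add_smul]
      · intro r a; rw [smul_assoc]
    have hT : HasFDerivAt G (LinearMap.toContinuousLinearMap hlin.mk') z := by
      have h1 := ((ContinuousLinearMap.mul ℝ ℍ[ℝ] u⁻¹).hasFDerivAt.comp z
        ((hf _ hz).comp z (hp z)))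
      have h2 : (ContinuousLinearMap.mul ℝ ℍ[ℝ] u⁻¹).comp ((rmulH (Lf f (p z))).comp P)
          = LinearMap.toContinuousLinearMap hlin.mk' := by
        apply ContinuousLinearMap.ext
        intro m
        show u⁻¹ * ((u * phiH m * c) * Lf f (p z)) = m • (c * Lf f (p z))
        rw [csmul_def]
        simp only [mul_assoc]
        rw [inv_mul_cancel_left₀ hu]
      rw [h2] at h1
      exact h1
    rw [hasDerivAt_iff_isLittleO]
    simpa using hT.isLittleO
  have hGd : DifferentiableOn ℂ G U := fun z hz =>
    ((keyA z hz).differentiableAt).differentiableWithinAt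
  have hAn : AnalyticOnNhd ℂ (deriv G) U := (hGd.analyticOnNhd hU).deriv
  have hW : HasDerivAt (deriv G) (deriv (deriv G) 0) 0 :=
    ((hAn 0 h0U).differentiableAt).hasDerivAt
  set W₀ := deriv (deriv G) 0 with hW₀_def
  have hder_eq : ∀ᶠ z in 𝓝 (0:ℂ), deriv G z = c * Lf f (p z) := by
    filter_upwards [hU.mem_nhds h0U] with z hz
    exact (keyA z hz).deriv
  -- derivative along real direction d
  have hcomp : ∀ d : ℂ, HasDerivAt (fun t : ℝ => c * Lf f (p (t • d))) (d • W₀) 0 := by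
    intro d
    have hline : HasDerivAt (fun t : ℝ => t • d) d 0 := by
      simpa using (hasDerivAt_id (0:ℝ)).smul_const d
    have hF : HasFDerivAt (deriv G)
        ((ContinuousLinearMap.smulRight (1 : ℂ →L[ℂ] ℂ) W₀).restrictScalars ℝ) 0 :=
      (hW.hasFDerivAt).restrictScalars ℝ
    have h0 : HasFDerivAt (deriv G)
        ((ContinuousLinearMap.smulRight (1 : ℂ →L[ℂ] ℂ) W₀).restrictScalars ℝ)
        ((fun t : ℝ => t • d) 0) := by simpa using hF
    have h1 := h0.comp_hasDerivAt 0 hline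
    have h2 : HasDerivAt (fun t : ℝ => deriv G (t • d)) (d • W₀) 0 := by
      simpa [Function.comp_def] using h1
    apply h2.congr_of_eventuallyEq
    have hcont : Tendsto (fun t : ℝ => t • d) (𝓝 0) (𝓝 (0:ℂ)) := by
      simpa using hline.continuousAt.tendsto
    filter_upwards [hcont.eventually hder_eq] with t ht
    exact ht.symm
  refine ⟨W₀, ?_, ?_⟩
  · have h1 := hcomp 1
    have heq : (fun t : ℝ => c * Lf f (p (t • (1:ℂ)))) =
        (fun t : ℝ => c * Lf f (q₀ + t • (u * c))) := by
      funext t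
      have h4 : (t • (1:ℂ)) = algebraMap ℝ ℂ t := by
        rw [Complex.real_smul, mul_one]; rfl
      simp only [hp_def, h4, phiH.commutes, real_mul_mul]
    rw [heq] at h1
    have hval : (1:ℂ) • W₀ = W₀ := one_smul _ _
    rw [hval] at h1
    have h2 := ((ContinuousLinearMap.mul ℝ ℍ[ℝ] c⁻¹).hasFDerivAt).comp_hasDerivAt 0 h1
    apply h2.congr_of_eventuallyEq
    apply Filter.Eventually.of_forall
    intro t
    simp only [Function.comp_apply, ContinuousLinearMap.mul_apply', inv_mul_cancel_left₀ hc]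
  · have h1 := hcomp Complex.I
    have heq : (fun t : ℝ => c * Lf f (p (t • Complex.I))) =
        (fun t : ℝ => c * Lf f (q₀ + t • (u * qI * c))) := by
      funext t
      have h3 : phiH (t • Complex.I) = t • qI := by rw [map_smul, phiH_I]
      simp only [hp_def, h3, mul_smul_comm, smul_mul_assoc]
    rw [heq] at h1
    have hval : (Complex.I : ℂ) • W₀ = qI * W₀ := by rw [csmul_def, phiH_I]
    rw [hval] at h1
    have h2 := ((ContinuousLinearMap.mul ℝ ℍ[ℝ] c⁻¹).hasFDerivAt).comp_hasDerivAt 0 h1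
    apply h2.congr_of_eventuallyEq
    apply Filter.Eventually.of_forall
    intro t
    simp only [Function.comp_apply, ContinuousLinearMap.mul_apply', inv_mul_cancel_left₀ hc]

lemma qK_mul_qK : qK * qK = -1 := by ext <;> simp [Quaternion.re_mul, Quaternion.imI_mul, Quaternion.imJ_mul, Quaternion.imK_mul] <;> simp [qK]
lemma qJ_mul_qI : qJ * qI = -qK := by ext <;> simp [Quaternion.re_mul, Quaternion.imI_mul, Quaternion.imJ_mul, Quaternion.imK_mul] <;> simp [qI, qJ, qK]
lemma qI_ne : qI ≠ 0 := by
  intro h; have := congrArg QuaternionAlgebra.imI h; simp [qI] at this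
lemma qK_ne : qK ≠ 0 := by
  intro h; have := congrArg QuaternionAlgebra.imK h; simp [qK] at this
lemma hu₂ : qI + qJ ≠ 0 := by
  intro h; have := congrArg QuaternionAlgebra.imI h; simp at this; simp [qI, qJ] at this
lemma hu₃ : qI + qK ≠ 0 := by
  intro h; have := congrArg QuaternionAlgebra.imI h; simp at this; simp [qI, qK] at this
lemma key₂ : (qI + qJ) * qI = qJ * (qI + qJ) := by ext <;> simp [Quaternion.re_mul, Quaternion.imI_mul, Quaternion.imJ_mul, Quaternion.imK_mul] <;> simp [qI, qJ]
lemma key₃ : (qI + qK) * qI = qK * (qI + qK) := by ext <;> simp [Quaternion.re_mul, Quaternion.imI_mul, Quaternion.imJ_mul, Quaternion.imK_mul] <;> simp [qI, qK]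
lemma qI_inv : qI⁻¹ = -qI := by
  apply inv_eq_of_mul_eq_one_right
  rw [mul_neg, qI_mul_qI, neg_neg]
lemma negqI_qJ_qI : -qI * qJ * qI = -qJ := by ext <;> simp [Quaternion.re_mul, Quaternion.imI_mul, Quaternion.imJ_mul, Quaternion.imK_mul] <;> simp [qI, qJ]
lemma negqJ_qI : -qJ * qI = qK := by ext <;> simp [Quaternion.re_mul, Quaternion.imI_mul, Quaternion.imJ_mul, Quaternion.imK_mul] <;> simp [qI, qJ, qK]
lemma dir₂ : (qI + qJ) * qI * (qI + qJ)⁻¹ = qJ := by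
  rw [key₂, mul_assoc, mul_inv_cancel₀ hu₂, mul_one]
lemma dir₃ : (qI + qK) * qI * (qI + qK)⁻¹ = qK := by
  rw [key₃, mul_assoc, mul_inv_cancel₀ hu₃, mul_one]

lemma hasDerivAt_neg_dir {g : ℍ[ℝ] → ℍ[ℝ]} {q a W : ℍ[ℝ]}
    (h : HasDerivAt (fun t : ℝ => g (q + t • a)) W 0) :
    HasDerivAt (fun t : ℝ => g (q + t • (-a))) (-W) 0 := by
  have h0 : HasDerivAt (fun t : ℝ => g (q + t • a)) W ((fun x : ℝ => -x) 0) := by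
    simpa using h
  have h2 := h0.scomp (0:ℝ) (hasDerivAt_neg (0:ℝ))
  have h3 : HasDerivAt ((fun t : ℝ => g (q + t • a)) ∘ (fun x : ℝ => -x)) (-W) 0 := by
    simpa using h2
  apply h3.congr_of_eventuallyEq
  apply Filter.Eventually.of_forall
  intro t
  simp [Function.comp, smul_neg, neg_smul]

lemma derivZero {D : Set ℍ[ℝ]} {f : ℍ[ℝ] → ℍ[ℝ]} (hD : IsOpen D)
    (hf : ∀ q ∈ D, HasFDerivAt f (rmulH (Lf f q)) q)
    {q : ℍ[ℝ]} (hq : q ∈ D) :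
    ∀ a ∈ ({1, qI, qJ, qK} : Set ℍ[ℝ]), HasDerivAt (fun t : ℝ => Lf f (q + t • a)) 0 0 := by
  obtain ⟨A, h1, hIa⟩ := sliceLemma hD hf hq 1 1 one_ne_zero one_ne_zero
  simp only [one_mul, mul_one, inv_one] at h1 hIa
  -- qJ direction
  obtain ⟨W2, h2a, h2b⟩ := sliceLemma hD hf hq (qI+qJ) (qI+qJ)⁻¹ hu₂ (inv_ne_zero hu₂)
  rw [mul_inv_cancel₀ hu₂, inv_inv] at h2a
  rw [show (qI+qJ) * qI * (qI+qJ)⁻¹ = qJ from dir₂, inv_inv] at h2b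
  have e2 : (qI+qJ) * W2 = A := h2a.unique h1
  have hJa : HasDerivAt (fun t : ℝ => Lf f (q + t • qJ)) (qJ * A) 0 := by
    have : (qI+qJ) * (qI * W2) = qJ * A := by
      rw [← mul_assoc, key₂, mul_assoc, e2]
    rwa [this] at h2b
  -- qK direction
  obtain ⟨W3, h3a, h3b⟩ := sliceLemma hD hf hq (qI+qK) (qI+qK)⁻¹ hu₃ (inv_ne_zero hu₃)
  rw [mul_inv_cancel₀ hu₃, inv_inv] at h3a
  rw [show (qI+qK) * qI * (qI+qK)⁻¹ = qK from dir₃, inv_inv] at h3b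
  have e3 : (qI+qK) * W3 = A := h3a.unique h1
  have hKa : HasDerivAt (fun t : ℝ => Lf f (q + t • qK)) (qK * A) 0 := by
    have : (qI+qK) * (qI * W3) = qK * A := by
      rw [← mul_assoc, key₃, mul_assoc, e3]
    rwa [this] at h3b
  -- the fourth slice, giving A = 0
  have hc4 : (qI+qJ)⁻¹ * qI ≠ 0 := mul_ne_zero (inv_ne_zero hu₂) qI_ne
  obtain ⟨W4, h4a, h4b⟩ := sliceLemma hD hf hq (qI+qJ) ((qI+qJ)⁻¹ * qI) hu₂ hc4
  rw [show (qI+qJ) * ((qI+qJ)⁻¹ * qI) = qI from mul_inv_cancel_left₀ hu₂ qI] at h4a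
  have hdir4 : (qI+qJ) * qI * ((qI+qJ)⁻¹ * qI) = -qK := by
    rw [key₂, mul_assoc, mul_inv_cancel_left₀ hu₂, qJ_mul_qI]
  rw [hdir4] at h4b
  have hcinv : ((qI+qJ)⁻¹ * qI)⁻¹ * qI * ((qI+qJ)⁻¹ * qI) = -qJ := by
    rw [mul_inv_rev, inv_inv, qI_inv]
    have : -qI * (qI+qJ) * qI * ((qI+qJ)⁻¹ * qI)
        = -qI * ((qI+qJ) * qI * (qI+qJ)⁻¹) * qI := by
      simp only [mul_assoc]
    rw [this, dir₂, negqI_qJ_qI]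
  have e1 : ((qI+qJ)⁻¹ * qI)⁻¹ * W4 = qI * A := h4a.unique hIa
  have hnegK : HasDerivAt (fun t : ℝ => Lf f (q + t • (-qK))) (-(qK * A)) 0 :=
    hasDerivAt_neg_dir hKa
  have e4 : ((qI+qJ)⁻¹ * qI)⁻¹ * (qI * W4) = -(qK * A) := h4b.unique hnegK
  set cc := (qI+qJ)⁻¹ * qI with hcc
  have etrans : cc⁻¹ * (qI * W4) = (cc⁻¹ * qI * cc) * (cc⁻¹ * W4) := by
    simp only [mul_assoc, mul_inv_cancel_left₀ hc4]
  rw [etrans, hcinv, e1] at e4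
  have e5 : qK * A = -(qK * A) := by
    rw [← e4, ← mul_assoc, negqJ_qI]
  have e6 : qK * A = 0 := by
    have h7 : qK * A + qK * A = 0 := by nth_rewrite 2 [e5]; simp
    rw [← two_smul ℝ (qK * A)] at h7
    rcases smul_eq_zero.mp h7 with h | h
    · norm_num at h
    · exact h
  have hA : A = 0 := by
    have : -qK * (qK * A) = A := by
      rw [← mul_assoc, neg_mul, qK_mul_qK, neg_neg, one_mul]
    rw [← this, e6, mul_zero]
  intro a ha
  rcases ha with rfl | rfl | rfl | rfl
  · rw [← hA]; exact h1
  · rw [show (0:ℍ[ℝ]) = qI * A by rw [hA, mul_zero]]; exact hIa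
  · rw [show (0:ℍ[ℝ]) = qJ * A by rw [hA, mul_zero]]; exact hJa
  · rw [show (0:ℍ[ℝ]) = qK * A by rw [hA, mul_zero]]; exact hKa

lemma norm_q_aux (x : ℍ[ℝ]) : ‖x‖^2 = x.re^2 + x.imI^2 + x.imJ^2 + x.imK^2 := by
  rw [sq, ← Quaternion.normSq_eq_norm_mul_self, Quaternion.normSq_def']

lemma abs_re_le (x : ℍ[ℝ]) : |x.re| ≤ ‖x‖ := by
  rw [← Real.sqrt_sq_eq_abs, ← Real.sqrt_sq (norm_nonneg x)]
  apply Real.sqrt_le_sqrt; nlinarith [norm_q_aux x, sq_nonneg x.imI, sq_nonneg x.imJ, sq_nonneg x.imK]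
lemma abs_imI_le (x : ℍ[ℝ]) : |x.imI| ≤ ‖x‖ := by
  rw [← Real.sqrt_sq_eq_abs, ← Real.sqrt_sq (norm_nonneg x)]
  apply Real.sqrt_le_sqrt; nlinarith [norm_q_aux x, sq_nonneg x.re, sq_nonneg x.imJ, sq_nonneg x.imK]
lemma abs_imJ_le (x : ℍ[ℝ]) : |x.imJ| ≤ ‖x‖ := by
  rw [← Real.sqrt_sq_eq_abs, ← Real.sqrt_sq (norm_nonneg x)]
  apply Real.sqrt_le_sqrt; nlinarith [norm_q_aux x, sq_nonneg x.re, sq_nonneg x.imI, sq_nonneg x.imK]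
lemma abs_imK_le (x : ℍ[ℝ]) : |x.imK| ≤ ‖x‖ := by
  rw [← Real.sqrt_sq_eq_abs, ← Real.sqrt_sq (norm_nonneg x)]
  apply Real.sqrt_le_sqrt; nlinarith [norm_q_aux x, sq_nonneg x.re, sq_nonneg x.imI, sq_nonneg x.imJ]

lemma norm_one_q : ‖(1:ℍ[ℝ])‖ = 1 := norm_one
lemma norm_qI : ‖qI‖ = 1 := by
  rw [← Real.sqrt_sq (norm_nonneg qI), norm_q_aux]; simp [qI]
lemma norm_qJ : ‖qJ‖ = 1 := by
  rw [← Real.sqrt_sq (norm_nonneg qJ), norm_q_aux]; simp [qJ]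
lemma norm_qK : ‖qK‖ = 1 := by
  rw [← Real.sqrt_sq (norm_nonneg qK), norm_q_aux]; simp [qK]

lemma abs_mem_uIcc {s T : ℝ} (hs : s ∈ Set.uIcc 0 T) : |s| ≤ |T| := by
  rcases Set.mem_uIcc.mp hs with ⟨h1, h2⟩ | ⟨h1, h2⟩ <;>
    (rw [abs_le]; constructor <;>
      [nlinarith [le_abs_self T, neg_abs_le T]; nlinarith [le_abs_self T, neg_abs_le T]])

variable {D : Set ℍ[ℝ]}

lemma segConst (g : ℍ[ℝ] → ℍ[ℝ])
    (hg : ∀ q ∈ D, ∀ a ∈ ({1, qI, qJ, qK} : Set ℍ[ℝ]),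
      HasDerivAt (fun t : ℝ => g (q + t • a)) 0 0)
    {q a : ℍ[ℝ]} (ha : a ∈ ({1, qI, qJ, qK} : Set ℍ[ℝ])) (T : ℝ)
    (hseg : ∀ t ∈ Set.uIcc (0:ℝ) T, q + t • a ∈ D) :
    g (q + T • a) = g q := by
  rcases eq_or_ne T 0 with rfl | hT
  · simp
  have hF : ∀ t ∈ Set.uIcc (0:ℝ) T, HasDerivAt (fun s : ℝ => g (q + s • a)) 0 t := by
    intro t ht
    have h0 := hg _ (hseg t ht) a ha
    have hline : HasDerivAt (fun s : ℝ => s - t) 1 t := by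
      simpa using (hasDerivAt_id t).sub_const t
    have h2 : HasDerivAt ((fun s : ℝ => g (q + t • a + s • a)) ∘ (fun s : ℝ => s - t))
        ((1:ℝ) • (0:ℍ[ℝ])) t := HasDerivAt.scomp_of_eq (hg := h0) (hh := hline) (hy := by simp)
    have h3 : HasDerivAt (fun s : ℝ => g (q + t • a + (s - t) • a)) 0 t := by
      simpa [Function.comp_def] using h2
    apply h3.congr_of_eventuallyEq
    apply Filter.Eventually.of_forall
    intro s
    show g (q + s • a) = g (q + t • a + (s - t) • a)
    congr 1
    module
  have hlt : (0:ℝ) ⊓ T < 0 ⊔ T := min_lt_max.mpr (fun h => hT h.symm)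
  have hconv : Convex ℝ (Set.uIcc (0:ℝ) T) := convex_uIcc 0 T
  have hUD : UniqueDiffOn ℝ (Set.uIcc (0:ℝ) T) := uniqueDiffOn_Icc hlt
  have hdiff : DifferentiableOn ℝ (fun s : ℝ => g (q + s • a)) (Set.uIcc (0:ℝ) T) :=
    fun t ht => (hF t ht).differentiableAt.differentiableWithinAt
  have hzero : ∀ t ∈ Set.uIcc (0:ℝ) T,
      fderivWithin ℝ (fun s : ℝ => g (q + s • a)) (Set.uIcc (0:ℝ) T) t = 0 := by
    intro t ht
    have h1 := ((hF t ht).hasFDerivAt.hasFDerivWithinAt).fderivWithin (hUD t ht)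
    rw [h1]
    apply ContinuousLinearMap.ext
    intro x
    simp
  have hfin := hconv.is_const_of_fderivWithin_eq_zero hdiff hzero
    Set.right_mem_uIcc Set.left_mem_uIcc
  simpa using hfin

lemma decomp (x p : ℍ[ℝ]) :
    p = x + (p-x).re • (1:ℍ[ℝ]) + (p-x).imI • qI + (p-x).imJ • qJ + (p-x).imK • qK := by
  ext <;> simp <;> simp [qI, qJ, qK]

lemma ballConst (hD : IsOpen D) (g : ℍ[ℝ] → ℍ[ℝ])
    (hg : ∀ q ∈ D, ∀ a ∈ ({1, qI, qJ, qK} : Set ℍ[ℝ]),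
      HasDerivAt (fun t : ℝ => g (q + t • a)) 0 0)
    {x : ℍ[ℝ]} {ε : ℝ} (hε : 0 < ε) (hball : Metric.ball x ε ⊆ D) :
    ∀ p ∈ Metric.ball x (ε/4), g p = g x := by
  intro p hp
  set t1 := (p-x).re with ht1
  set t2 := (p-x).imI with ht2
  set t3 := (p-x).imJ with ht3
  set t4 := (p-x).imK with ht4
  have hd : ‖p - x‖ < ε/4 := by
    rw [← dist_eq_norm]; exact Metric.mem_ball.mp hp
  have hb1 : |t1| ≤ ‖p-x‖ := abs_re_le _
  have hb2 : |t2| ≤ ‖p-x‖ := abs_imI_le _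
  have hb3 : |t3| ≤ ‖p-x‖ := abs_imJ_le _
  have hb4 : |t4| ≤ ‖p-x‖ := abs_imK_le _
  set q1 := x + t1 • (1:ℍ[ℝ]) with hq1
  set q2 := q1 + t2 • qI with hq2
  set q3 := q2 + t3 • qJ with hq3
  have hpd : p = q3 + t4 • qK := by
    rw [hq3, hq2, hq1]; exact decomp x p
  -- norm estimates for segment points
  have hseg1 : ∀ s ∈ Set.uIcc (0:ℝ) t1, x + s • (1:ℍ[ℝ]) ∈ D := by
    intro s hs
    apply hball
    rw [Metric.mem_ball, dist_eq_norm]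
    have : x + s • (1:ℍ[ℝ]) - x = s • (1:ℍ[ℝ]) := by abel
    rw [this, norm_smul, norm_one_q, mul_one, Real.norm_eq_abs]
    calc |s| ≤ |t1| := abs_mem_uIcc hs
    _ ≤ ‖p-x‖ := hb1
    _ < ε/4 := hd
    _ ≤ ε := by linarith
  have hseg2 : ∀ s ∈ Set.uIcc (0:ℝ) t2, q1 + s • qI ∈ D := by
    intro s hs
    apply hball
    rw [Metric.mem_ball, dist_eq_norm]
    have he : q1 + s • qI - x = t1 • (1:ℍ[ℝ]) + s • qI := by rw [hq1]; abel
    rw [he]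
    calc ‖t1 • (1:ℍ[ℝ]) + s • qI‖ ≤ ‖t1 • (1:ℍ[ℝ])‖ + ‖s • qI‖ := norm_add_le _ _
    _ = |t1| + |s| := by rw [norm_smul, norm_smul, norm_one_q, norm_qI, mul_one, mul_one,
        Real.norm_eq_abs, Real.norm_eq_abs]
    _ ≤ ‖p-x‖ + ‖p-x‖ := add_le_add hb1 ((abs_mem_uIcc hs).trans hb2)
    _ < ε := by linarith
  have hseg3 : ∀ s ∈ Set.uIcc (0:ℝ) t3, q2 + s • qJ ∈ D := by
    intro s hs
    apply hball
    rw [Metric.mem_ball, dist_eq_norm]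
    have he : q2 + s • qJ - x = t1 • (1:ℍ[ℝ]) + t2 • qI + s • qJ := by
      rw [hq2, hq1]; abel
    rw [he]
    calc ‖t1 • (1:ℍ[ℝ]) + t2 • qI + s • qJ‖
        ≤ ‖t1 • (1:ℍ[ℝ])‖ + ‖t2 • qI‖ + ‖s • qJ‖ := norm_add₃_le
    _ = |t1| + |t2| + |s| := by rw [norm_smul, norm_smul, norm_smul, norm_one_q, norm_qI,
        norm_qJ, mul_one, mul_one, mul_one, Real.norm_eq_abs, Real.norm_eq_abs, Real.norm_eq_abs]
    _ ≤ ‖p-x‖ + ‖p-x‖ + ‖p-x‖ := by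
        refine add_le_add (add_le_add hb1 hb2) ((abs_mem_uIcc hs).trans hb3)
    _ < ε := by linarith
  have hseg4 : ∀ s ∈ Set.uIcc (0:ℝ) t4, q3 + s • qK ∈ D := by
    intro s hs
    apply hball
    rw [Metric.mem_ball, dist_eq_norm]
    have he : q3 + s • qK - x = t1 • (1:ℍ[ℝ]) + t2 • qI + t3 • qJ + s • qK := by
      rw [hq3, hq2, hq1]; abel
    rw [he]
    calc ‖t1 • (1:ℍ[ℝ]) + t2 • qI + t3 • qJ + s • qK‖
        ≤ ‖t1 • (1:ℍ[ℝ]) + t2 • qI + t3 • qJ‖ + ‖s • qK‖ := norm_add_le _ _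
    _ ≤ ‖t1 • (1:ℍ[ℝ])‖ + ‖t2 • qI‖ + ‖t3 • qJ‖ + ‖s • qK‖ := by
        refine add_le_add_left norm_add₃_le _
    _ = |t1| + |t2| + |t3| + |s| := by rw [norm_smul, norm_smul, norm_smul, norm_smul,
        norm_one_q, norm_qI, norm_qJ, norm_qK, mul_one, mul_one, mul_one, mul_one,
        Real.norm_eq_abs, Real.norm_eq_abs, Real.norm_eq_abs, Real.norm_eq_abs]
    _ ≤ ‖p-x‖ + ‖p-x‖ + ‖p-x‖ + ‖p-x‖ := by
        refine add_le_add (add_le_add (add_le_add hb1 hb2) hb3) ((abs_mem_uIcc hs).trans hb4)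
    _ < ε := by linarith
  have e1 : g q1 = g x := segConst g hg (by simp) t1 hseg1
  have e2 : g q2 = g q1 := segConst g hg (by simp) t2 hseg2
  have e3 : g q3 = g q2 := segConst g hg (by simp) t3 hseg3
  have e4 : g p = g q3 := by
    rw [hpd]
    exact segConst g hg (by simp) t4 hseg4
  rw [e4, e3, e2, e1]

lemma globConst (hD : IsOpen D) (hconn : IsPreconnected D) (g : ℍ[ℝ] → ℍ[ℝ])
    (hg : ∀ q ∈ D, ∀ a ∈ ({1, qI, qJ, qK} : Set ℍ[ℝ]),
      HasDerivAt (fun t : ℝ => g (q + t • a)) 0 0)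
    {x₀ : ℍ[ℝ]} (hx₀ : x₀ ∈ D) : ∀ q ∈ D, g q = g x₀ := by
  set U : Set ℍ[ℝ] := {q : ℍ[ℝ] | ∃ ε > 0, Metric.ball q ε ⊆ D ∧ g q = g x₀} with hU
  set V : Set ℍ[ℝ] := {q : ℍ[ℝ] | ∃ ε > 0, Metric.ball q ε ⊆ D ∧ g q ≠ g x₀} with hV
  have hloc : ∀ q ∈ D, ∃ ε > 0, Metric.ball q ε ⊆ D ∧
      ∀ p ∈ Metric.ball q (ε/4), g p = g q := by
    intro q hq
    obtain ⟨ε, hε, hball⟩ := Metric.isOpen_iff.mp hD q hq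
    exact ⟨ε, hε, hball, ballConst hD g hg hε hball⟩
  have hUopen : IsOpen U := by
    rw [Metric.isOpen_iff]
    intro q hq
    obtain ⟨ε, hε, hball, hcst⟩ := hloc q (by
      obtain ⟨ε, hε, hball, _⟩ := hq; exact hball (Metric.mem_ball_self hε))
    refine ⟨ε/4, by linarith, ?_⟩
    intro p hp
    refine ⟨ε/4, by linarith, ?_, ?_⟩
    · intro y hy
      apply hball
      rw [Metric.mem_ball] at *
      calc dist y q ≤ dist y p + dist p q := dist_triangle _ _ _
      _ < ε/4 + ε/4 := add_lt_add hy hp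
      _ ≤ ε := by linarith
    · rw [hcst p hp]
      obtain ⟨_, _, _, h⟩ := hq
      exact h
  have hVopen : IsOpen V := by
    rw [Metric.isOpen_iff]
    intro q hq
    obtain ⟨ε, hε, hball, hcst⟩ := hloc q (by
      obtain ⟨ε, hε, hball, _⟩ := hq; exact hball (Metric.mem_ball_self hε))
    refine ⟨ε/4, by linarith, ?_⟩
    intro p hp
    refine ⟨ε/4, by linarith, ?_, ?_⟩
    · intro y hy
      apply hball
      rw [Metric.mem_ball] at *
      calc dist y q ≤ dist y p + dist p q := dist_triangle _ _ _
      _ < ε/4 + ε/4 := add_lt_add hy hp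
      _ ≤ ε := by linarith
    · rw [hcst p hp]
      obtain ⟨_, _, _, h⟩ := hq
      exact h
  have hcover : D ⊆ U ∪ V := by
    intro q hq
    obtain ⟨ε, hε, hball, _⟩ := hloc q hq
    rcases eq_or_ne (g q) (g x₀) with h | h
    · exact Or.inl ⟨ε, hε, hball, h⟩
    · exact Or.inr ⟨ε, hε, hball, h⟩
  intro q hq
  by_contra hne
  have hUne : (D ∩ U).Nonempty := by
    obtain ⟨ε, hε, hball, _⟩ := hloc x₀ hx₀
    exact ⟨x₀, hx₀, ⟨ε, hε, hball, rfl⟩⟩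
  have hVne : (D ∩ V).Nonempty := by
    obtain ⟨ε, hε, hball, _⟩ := hloc q hq
    exact ⟨q, hq, ⟨ε, hε, hball, hne⟩⟩
  obtain ⟨y, _, ⟨_, _, _, hy1⟩, ⟨_, _, _, hy2⟩⟩ :=
    hconn U V hUopen hVopen hcover hUne hVne
  exact hy2 hy1

theorem right_quotient_limit_implies_affine
    (D : Set ℍ[ℝ]) (hD : IsOpen D) (hDconn : IsConnected D) (f : ℍ[ℝ] → ℍ[ℝ])
    (hlim : ∀ q ∈ D, ∃ L : ℍ[ℝ],
      Tendsto (fun h : ℍ[ℝ] => h⁻¹ * (f (q + h) - f q))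
        (𝓝[{h : ℍ[ℝ] | h ≠ 0 ∧ q + h ∈ D}] 0) (𝓝 L)) :
    ∃ ν lam : ℍ[ℝ], ∀ q ∈ D, f q = q * ν + lam := by
  obtain ⟨x₀, hx₀⟩ := hDconn.nonempty
  have hfd : ∀ q ∈ D, HasFDerivAt f (rmulH (Lf f q)) q := fundamental hD hlim
  have hLz : ∀ q ∈ D, ∀ a ∈ ({1, qI, qJ, qK} : Set ℍ[ℝ]),
      HasDerivAt (fun t : ℝ => Lf f (q + t • a)) 0 0 := fun q hq => derivZero hD hfd hq
  set ν := Lf f x₀ with hν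
  have hLconst : ∀ q ∈ D, Lf f q = ν := globConst hD hDconn.isPreconnected (Lf f) hLz hx₀
  set g2 : ℍ[ℝ] → ℍ[ℝ] := fun q => f q - q * ν with hg2def
  have hg2 : ∀ q ∈ D, ∀ a ∈ ({1, qI, qJ, qK} : Set ℍ[ℝ]),
      HasDerivAt (fun t : ℝ => g2 (q + t • a)) 0 0 := by
    intro q hq a ha
    have h1 : HasFDerivAt f (rmulH ν) q := by
      rw [← hLconst q hq]; exact hfd q hq
    have h2 : HasFDerivAt g2 (0 : ℍ[ℝ] →L[ℝ] ℍ[ℝ]) q := by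
      have h3 := h1.sub (rmulH ν).hasFDerivAt
      have h4 : rmulH ν - rmulH ν = (0 : ℍ[ℝ] →L[ℝ] ℍ[ℝ]) := sub_self _
      rw [h4] at h3
      exact h3
    have hline : HasDerivAt (fun t : ℝ => q + t • a) a 0 := by
      simpa using ((hasDerivAt_id (0:ℝ)).smul_const a).const_add q
    have h2' : HasFDerivAt g2 (0 : ℍ[ℝ] →L[ℝ] ℍ[ℝ]) ((fun t : ℝ => q + t • a) 0) := by
      simpa using h2
    have h3 := h2'.comp_hasDerivAt 0 hline
    simpa [Function.comp_def] using h3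
  have hg2c : ∀ q ∈ D, g2 q = g2 x₀ := globConst hD hDconn.isPreconnected g2 hg2 hx₀
  refine ⟨ν, f x₀ - x₀ * ν, ?_⟩
  intro q hq
  have hq2 := hg2c q hq
  simp only [hg2def] at hq2
  rw [sub_eq_iff_eq_add.mp hq2, add_comm]

end
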